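/- The Laurent polynomial γ = ((1+y)^3 + 3x(1+y)^2 + x^2(1+y)(3+y) + x^3)/(xy) is not mutable with respect to the mutation datum (φ, 1+x) where φ(a,b) = b - 1; that is, writing γ = Σ_k γ_k by the grading φ, the part γ_{-2} (the terms with y-degree -1) is not divisible by (1+x)^2 in ℂ[x^{±1}]. -/

import Mathlib

noncomputable section

/-- The ring of Laurent polynomials in two variables over ℂ. -/
abbrev A2 : Type := AddMonoidAlgebra ℂ (ℤ × ℤ)

def X : A2 := AddMonoidAlgebra.single (1, 0) 1
def Y : A2 := AddMonoidAlgebra.single (0, 1) 1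
def Xi : A2 := AddMonoidAlgebra.single (-1, 0) 1
def Yi : A2 := AddMonoidAlgebra.single (0, -1) 1

/-- The part of `f` on the level set `(φ = k)` for `φ(a,b) = b - 1`. -/
def part (f : A2) (k : ℤ) : A2 := AddMonoidAlgebra.ofCoeff (Finsupp.filter (fun p : ℤ × ℤ => p.2 - 1 = k) f.coeff)

/-- `γ = ((1+y)³ + 3x(1+y)² + x²(1+y)(3+y) + x³)/(xy)`. -/
def γ : A2 := ((1 + Y) ^ 3 + 3 * X * (1 + Y) ^ 2 + X ^ 2 * (1 + Y) * (3 + Y) + X ^ 3) * Xi * Yi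

open AddMonoidAlgebra

lemma gexp : γ =
    single (-1,-1) 1 + single (-1,0) 3 + single (-1,1) 3 + single (-1,2) 1 +
    single (0,-1) 3 + single (0,0) 6 + single (0,1) 3 +
    single (1,-1) 3 + single (1,0) 4 + single (1,1) 1 +
    single (2,-1) 1 := by
  have h1 : (1 : A2) = single ((0:ℤ),(0:ℤ)) 1 := rfl
  have h3 : (3 : A2) = single ((0:ℤ),(0:ℤ)) 3 := rfl
  rw [γ, X, Y, Xi, Yi]
  simp only [h1, h3, pow_succ, pow_zero, one_mul, mul_add, add_mul,
    AddMonoidAlgebra.single_mul_single, Prod.mk_add_mk]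
  norm_num
  have hs : ∀ (a : ℤ×ℤ) (c : ℂ), single a c = c • single a 1 := fun a c => by
    rw [AddMonoidAlgebra.smul_single', mul_one]
  simp only [fun a => hs a 3, fun a => hs a 4, fun a => hs a 6]
  module

/-- Evaluation `x ↦ -1, y ↦ 1`. -/
def evf : Multiplicative (ℤ × ℤ) →* ℂ where
  toFun p := (-1 : ℂ) ^ (Multiplicative.toAdd p).1
  map_one' := by simp
  map_mul' p q := by
    show (-1:ℂ) ^ ((Multiplicative.toAdd p).1 + (Multiplicative.toAdd q).1) = _
    rw [zpow_add₀ (by norm_num : (-1:ℂ) ≠ 0)]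

def ev : A2 →ₐ[ℂ] ℂ := AddMonoidAlgebra.lift ℂ ℂ (ℤ × ℤ) evf

lemma ev_single (a : ℤ × ℤ) (c : ℂ) : ev (single a c) = c * (-1 : ℂ) ^ a.1 := by
  rw [ev, AddMonoidAlgebra.lift_single]
  rfl

lemma part_gamma : part γ (-1) = single (-1,0) 3 + single (0,0) 6 + single (1,0) 4 := by
  rw [part, gexp]
  simp only [AddMonoidAlgebra.coeff_add, AddMonoidAlgebra.coeff_single]
  repeat rw [Finsupp.filter_add]
  rw [Finsupp.filter_single_of_neg _ (by norm_num),
    Finsupp.filter_single_of_pos _ (by norm_num),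
    Finsupp.filter_single_of_neg _ (by norm_num),
    Finsupp.filter_single_of_neg _ (by norm_num),
    Finsupp.filter_single_of_neg _ (by norm_num),
    Finsupp.filter_single_of_pos _ (by norm_num),
    Finsupp.filter_single_of_neg _ (by norm_num),
    Finsupp.filter_single_of_neg _ (by norm_num),
    Finsupp.filter_single_of_pos _ (by norm_num),
    Finsupp.filter_single_of_neg _ (by norm_num),
    Finsupp.filter_single_of_neg _ (by norm_num)]
  simp only [add_zero, zero_add, AddMonoidAlgebra.ofCoeff_add, AddMonoidAlgebra.ofCoeff_single]

theorem gamma_not_mutable :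
    ¬ (∀ k : ℤ, k < 0 → (1 + X) ^ (-k).toNat ∣ part γ k) := by
  intro h
  obtain ⟨q, hq⟩ := h (-1) (by norm_num)
  have h0 : ev (1 + X) = 0 := by
    rw [map_add, map_one, X, ev_single]
    norm_num
  have hL : ev (part γ (-1)) = -1 := by
    rw [part_gamma, map_add, map_add, ev_single, ev_single, ev_single]
    norm_num
  rw [hq, map_mul, map_pow, h0] at hL
  norm_num at hL
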